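/- Let X be a compact metric space, K ⊂ M_+(X) nonempty, convex, weakly compact, closed under domination, and Cap(A) = sup{μ(A) : μ ∈ K}. If ν is a finite nonnegative Borel measure on X majorized by Cap (i.e. ν(A) ≤ Cap(A) for all Borel A), then ν is the supremum (upper envelope) of the set {μ ∈ ∪_{n≥1} n·K : μ ≤ ν}. -/

import Mathlib

open MeasureTheory Topology
open scoped NNReal ENNReal

section AuxLemmas

private lemma aux_sep {ι : Type*} [Fintype ι] [DecidableEq ι] [Nonempty ι]
    {C : Set (ι → ℝ)} (hC : Convex ℝ C) (hCne : C.Nonempty) {s : ℝ}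
    (h : ∀ y ∈ C, ∃ i, y i ≤ s) :
    ∃ lam : ι → ℝ, (∀ i, 0 ≤ lam i) ∧ (∑ i, lam i) = 1 ∧
      ∀ y ∈ C, ∑ i, lam i * y i ≤ s := by
  classical
  set Q : Set (ι → ℝ) := {z | ∀ i, s < z i} with hQ
  have hQo : IsOpen Q := by
    have : Q = ⋂ i, {z : ι → ℝ | s < z i} := by
      ext z; simp [hQ, Set.mem_iInter]
    rw [this]
    exact isOpen_iInter_of_finite fun i =>
      isOpen_lt continuous_const (continuous_apply i)
  have hQc : Convex ℝ Q := by
    intro z₁ h₁ z₂ h₂ a b ha hb hab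
    intro i
    have hz₁ : s < z₁ i := h₁ i
    have hz₂ : s < z₂ i := h₂ i
    have hs' : s = a * s + b * s := by rw [← add_mul, hab, one_mul]
    have hzi : (a • z₁ + b • z₂) i = a * z₁ i + b * z₂ i := by
      simp [smul_eq_mul]
    rw [hzi]
    rcases ha.lt_or_eq with ha' | ha'
    · have hh1 : a * s < a * z₁ i := (mul_lt_mul_iff_right₀ ha').2 hz₁
      have hh2 : b * s ≤ b * z₂ i := mul_le_mul_of_nonneg_left hz₂.le hb
      calc s = a * s + b * s := hs'
        _ < a * z₁ i + b * z₂ i := add_lt_add_of_lt_of_le hh1 hh2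
    · have hb1 : b = 1 := by rw [← ha'] at hab; simpa using hab
      rw [← ha', hb1]
      simpa using hz₂
  have hdisj : Disjoint Q C := by
    rw [Set.disjoint_left]
    intro z hzQ hzC
    obtain ⟨i, hi⟩ := h z hzC
    exact absurd hi (not_le.2 (hzQ i))
  obtain ⟨l, u, hQu, hCu⟩ := geometric_hahn_banach_open hQc hQo hC hdisj
  set w : ι → ℝ := fun i => l (fun j => if i = j then 1 else 0) with hw
  have hl : ∀ y : ι → ℝ, l y = ∑ i, y i * w i := by
    intro y
    conv_lhs => rw [pi_eq_sum_univ y]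
    rw [_root_.map_sum]
    refine Finset.sum_congr rfl fun i _ => ?_
    rw [_root_.map_smul]
    simp [hw, smul_eq_mul]
  have hconst : ∀ eps : ℝ, 0 < eps → (fun _ : ι => s + eps) ∈ Q := by
    intro eps heps i
    simpa using heps
  have hwle : ∀ i, w i ≤ 0 := by
    intro i
    by_contra hwi
    push_neg at hwi
    obtain ⟨M, hM⟩ := exists_nat_gt ((u - l (fun _ : ι => s + 1)) / w i)
    set e : ι → ℝ := fun j => if i = j then 1 else 0 with he
    have hzQ : ((fun _ : ι => s + 1) + (M : ℝ) • e) ∈ Q := by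
      intro j
      have : (0:ℝ) ≤ (M : ℝ) * e j := by
        rcases eq_or_ne i j with rfl | hij
        · simp [he]
        · simp [he, hij]
      have : s + 1 + (M : ℝ) * e j ≥ s + 1 := by linarith
      simp only [Pi.add_apply, Pi.smul_apply, smul_eq_mul]
      linarith
    have hlz := hQu _ hzQ
    rw [_root_.map_add, _root_.map_smul, smul_eq_mul] at hlz
    have hle : l e = w i := rfl
    rw [hle] at hlz
    rw [div_lt_iff₀ hwi] at hM
    linarith
  set S : ℝ := ∑ i, w i with hS
  have hconstval : ∀ c : ℝ, l (fun _ : ι => c) = c * S := by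
    intro c
    rw [hl, hS, Finset.mul_sum]
  have hSle : S ≤ 0 := Finset.sum_nonpos fun i _ => hwle i
  have hsS : s * S ≤ u := by
    rcases eq_or_lt_of_le hSle with hS0 | hSneg
    · have h2 := hQu _ (hconst 1 one_pos)
      rw [hconstval] at h2
      rw [hS0] at h2 ⊢
      simpa using h2.le
    · by_contra hcon
      push_neg at hcon
      set eps := (s * S - u) / (2 * (-S)) with heps
      have hepspos : 0 < eps := div_pos (by linarith) (by linarith)
      have hkey := hQu _ (hconst eps hepspos)
      rw [hconstval] at hkey
      have h3 : eps * (2 * (-S)) = s * S - u :=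
        div_mul_cancel₀ _ (by nlinarith : 2 * (-S) ≠ 0)
      have h4 : (s + eps) * S = s * S + eps * S := by ring
      have h5 : eps * S = -((s * S - u) / 2) := by linarith
      rw [h4, h5] at hkey
      linarith
  have hSneg : S < 0 := by
    rcases eq_or_lt_of_le hSle with hS0 | h'
    swap
    · exact h'
    exfalso
    have hsum0 : ∑ i ∈ Finset.univ, w i = 0 := by rw [← hS]; exact hS0
    have hall := (Finset.sum_eq_zero_iff_of_nonpos (fun i _ => hwle i)).1 hsum0
    have hlzero : ∀ y, l y = 0 := by
      intro y
      rw [hl]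
      exact Finset.sum_eq_zero fun i _ => by
        rw [hall i (Finset.mem_univ i), mul_zero]
    obtain ⟨y₀, hy₀⟩ := hCne
    have h1 := hCu y₀ hy₀
    have h2 := hQu _ (hconst 1 one_pos)
    rw [hlzero] at h1 h2
    linarith
  refine ⟨fun i => w i / S, fun i => ?_, ?_, ?_⟩
  · have := div_nonneg (neg_nonneg.2 (hwle i)) (neg_nonneg.2 hSle)
    rwa [neg_div_neg_eq] at this
  · rw [← Finset.sum_div, ← hS, div_self hSneg.ne]
  · intro y hy
    have hyu : u ≤ ∑ i, y i * w i := by rw [← hl]; exact hCu y hy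
    have heq : ∑ i, w i / S * y i = (∑ i, y i * w i) / S := by
      rw [Finset.sum_div]
      exact Finset.sum_congr rfl fun i _ => by ring
    rw [heq, div_le_iff_of_neg hSneg]
    calc s * S ≤ u := hsS
      _ ≤ ∑ i, y i * w i := hyu

section
open Set

private lemma aux_hahn {X : Type*} [MetricSpace X] [CompactSpace X] [MeasurableSpace X] [BorelSpace X]
    (ν' μ₂ : Measure X) [IsFiniteMeasure ν'] [IsFiniteMeasure μ₂]
    {δ : ℝ≥0∞} (hδ : δ ≠ 0) :
    ∃ (m : Measure X) (f f' : C(X, ℝ≥0)),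
      m ≤ ν' ∧ m ≤ μ₂ ∧ (∀ x, f x + f' x = 1) ∧
      ∫⁻ x, (f' x : ℝ≥0∞) ∂ν' + ∫⁻ x, (f x : ℝ≥0∞) ∂μ₂ ≤ m Set.univ + δ := by
  obtain ⟨H, hH, h₁, h₂⟩ := hahn_decomposition (μ := μ₂) (ν := ν')
  -- on subsets of H : ν' ≤ μ₂ ; on subsets of Hᶜ : μ₂ ≤ ν'
  set m : Measure X := ν'.restrict H + μ₂.restrict Hᶜ with hm
  have hmapp : ∀ B : Set X, MeasurableSet B → m B = ν' (B ∩ H) + μ₂ (B ∩ Hᶜ) := by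
    intro B hB
    rw [hm]
    simp [Measure.restrict_apply hB]
  have hsplitν' : ∀ B : Set X, MeasurableSet B → ν' (B ∩ H) + ν' (B ∩ Hᶜ) = ν' B := by
    intro B hB
    have := measure_inter_add_diff (μ := ν') B hH
    rwa [Set.diff_eq] at this
  have hsplitμ₂ : ∀ B : Set X, MeasurableSet B → μ₂ (B ∩ H) + μ₂ (B ∩ Hᶜ) = μ₂ B := by
    intro B hB
    have := measure_inter_add_diff (μ := μ₂) B hH
    rwa [Set.diff_eq] at this
  have hmν' : m ≤ ν' := by
    rw [Measure.le_iff]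
    intro B hB
    rw [hmapp B hB, ← hsplitν' B hB]
    refine add_le_add le_rfl ?_
    exact h₂ _ (hB.inter hH.compl) Set.inter_subset_right
  have hmμ₂ : m ≤ μ₂ := by
    rw [Measure.le_iff]
    intro B hB
    rw [hmapp B hB, ← hsplitμ₂ B hB]
    refine add_le_add ?_ le_rfl
    exact h₁ _ (hB.inter hH) Set.inter_subset_right
  have hmuniv : m Set.univ = ν' H + μ₂ Hᶜ := by
    rw [hmapp _ MeasurableSet.univ, Set.univ_inter, Set.univ_inter]
  -- regularity
  set ρ : Measure X := ν' + μ₂ with hρ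
  have hρfin : ∀ B : Set X, ρ B ≠ ∞ := fun B => measure_ne_top ρ B
  have hδ2 : δ / 2 ≠ 0 := by
    simp [ENNReal.div_eq_zero_iff, hδ]
  obtain ⟨F, hFsub, hFclosed, hFlt⟩ :=
    (hH.compl).exists_isClosed_lt_add (μ := ρ) (hρfin Hᶜ) hδ2
  obtain ⟨U, hUsub, hUopen, hUlt⟩ :=
    Set.exists_isOpen_lt_add (μ := ρ) Hᶜ (hρfin Hᶜ) hδ2
  -- Urysohn
  have hdisj : Disjoint Uᶜ F := by
    rw [Set.disjoint_left]
    intro x hxU hxF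
    exact hxU (hUsub (hFsub hxF))
  obtain ⟨g, hg0, hg1, hg01⟩ :=
    exists_continuous_zero_one_of_isClosed hUopen.isClosed_compl hFclosed hdisj
  set f : C(X, ℝ≥0) := ⟨fun x => (g x).toNNReal, by
    exact continuous_real_toNNReal.comp g.continuous⟩ with hf
  set f' : C(X, ℝ≥0) := ⟨fun x => 1 - (g x).toNNReal, by
    exact (continuous_const.sub (continuous_real_toNNReal.comp g.continuous))⟩ with hf'
  have hfle1 : ∀ x, f x ≤ 1 := by
    intro x
    simp only [hf, ContinuousMap.coe_mk]
    rw [← Real.toNNReal_one]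
    exact Real.toNNReal_mono (hg01 x).2
  have hff' : ∀ x, f x + f' x = 1 := by
    intro x
    simp only [hf, hf', ContinuousMap.coe_mk]
    exact add_tsub_cancel_of_le (hfle1 x)
  refine ⟨m, f, f', hmν', hmμ₂, hff', ?_⟩
  -- bounds
  have hb1 : ∫⁻ x, (f' x : ℝ≥0∞) ∂ν' ≤ ν' Fᶜ := by
    apply lintegral_le_meas
    · intro x
      have : f' x ≤ 1 := by
        rw [← hff' x]; exact le_add_self
      exact_mod_cast this
    · intro x hx
      rw [compl_compl] at hx
      have : f' x = 0 := by
        simp only [hf', ContinuousMap.coe_mk]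
        have : g x = 1 := hg1 hx
        rw [this]
        simp
      exact_mod_cast congrArg (fun y : ℝ≥0 => (y : ℝ≥0∞)) this
  have hb2 : ∫⁻ x, (f x : ℝ≥0∞) ∂μ₂ ≤ μ₂ U := by
    apply lintegral_le_meas
    · intro x
      exact_mod_cast hfle1 x
    · intro x hx
      have : g x = 0 := hg0 hx
      simp only [hf, ContinuousMap.coe_mk, this]
      simp
  have hρle1 : ν' Fᶜ ≤ ν' H + δ / 2 := by
    have hsub : Fᶜ ⊆ H ∪ (Hᶜ \ F) := by
      intro x hx
      by_cases hxH : x ∈ H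
      · exact Or.inl hxH
      · exact Or.inr ⟨hxH, hx⟩
    calc ν' Fᶜ ≤ ν' (H ∪ (Hᶜ \ F)) := measure_mono hsub
      _ ≤ ν' H + ν' (Hᶜ \ F) := measure_union_le _ _
      _ ≤ ν' H + ρ (Hᶜ \ F) := by gcongr; exact Measure.le_add_right le_rfl
      _ ≤ ν' H + δ / 2 := by
        gcongr
        have hdiff : ρ (Hᶜ \ F) = ρ Hᶜ - ρ F :=
          measure_diff hFsub hFclosed.measurableSet.nullMeasurableSet (hρfin F)
        rw [hdiff]
        exact tsub_le_iff_right.2 (by rw [add_comm]; exact hFlt.le)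
  have hρle2 : μ₂ U ≤ μ₂ Hᶜ + δ / 2 := by
    have hsub : U ⊆ Hᶜ ∪ (U \ Hᶜ) := by
      intro x hx
      by_cases hxH : x ∈ Hᶜ
      · exact Or.inl hxH
      · exact Or.inr ⟨hx, hxH⟩
    calc μ₂ U ≤ μ₂ (Hᶜ ∪ (U \ Hᶜ)) := measure_mono hsub
      _ ≤ μ₂ Hᶜ + μ₂ (U \ Hᶜ) := measure_union_le _ _
      _ ≤ μ₂ Hᶜ + ρ (U \ Hᶜ) := by gcongr; exact Measure.le_add_left le_rfl
      _ ≤ μ₂ Hᶜ + δ / 2 := by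
        gcongr
        have hdiff : ρ (U \ Hᶜ) = ρ U - ρ Hᶜ :=
          measure_diff hUsub hH.compl.nullMeasurableSet (hρfin Hᶜ)
        rw [hdiff]
        exact tsub_le_iff_right.2 (by rw [add_comm]; exact hUlt.le)
  calc ∫⁻ x, (f' x : ℝ≥0∞) ∂ν' + ∫⁻ x, (f x : ℝ≥0∞) ∂μ₂
      ≤ (ν' H + δ / 2) + (μ₂ Hᶜ + δ / 2) := add_le_add (hb1.trans hρle1) (hb2.trans hρle2)
    _ = (ν' H + μ₂ Hᶜ) + (δ / 2 + δ / 2) := by ring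
    _ = m Set.univ + δ := by rw [hmuniv, ENNReal.add_halves]

end
end AuxLemmas

/-- a finite measure `ν` majorized by the capacity of `K` is the upper envelope of
the measures in the cone `⋃_{n≥1} n·K` that are dominated by `ν`. -/
theorem stmt_5 {X : Type*} [MetricSpace X] [CompactSpace X]
    [MeasurableSpace X] [BorelSpace X]
    (K : Set (FiniteMeasure X))
    (hne : K.Nonempty)
    (hconv : Convex ℝ≥0 K)
    (hcomp : IsCompact K)
    (hdown : ∀ ν ∈ K, ∀ τ : FiniteMeasure X, (τ : Measure X) ≤ (ν : Measure X) → τ ∈ K)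
    (ν : Measure X) [IsFiniteMeasure ν]
    (hmaj : ∀ A : Set X, MeasurableSet A → ν A ≤ ⨆ τ ∈ K, (τ : Measure X) A) :
    ∀ A : Set X, MeasurableSet A →
      ν A = ⨆ (m : Measure X) (_ : (∃ n : ℕ, 1 ≤ n ∧ ∃ κ ∈ K,
        m = (n : ℝ≥0∞) • (κ : Measure X)) ∧ m ≤ ν), m A := by
  intro A hA
  classical
  set t : ℝ≥0∞ := ⨆ (m : Measure X) (_ : (∃ n : ℕ, 1 ≤ n ∧ ∃ κ ∈ K,
        m = (n : ℝ≥0∞) • (κ : Measure X)) ∧ m ≤ ν), m A with ht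
  have htle : t ≤ ν A := iSup₂_le fun m hm => Measure.le_iff'.1 hm.2 A
  refine le_antisymm ?_ htle
  by_contra hcon
  push_neg at hcon
  -- basic quantities
  have hνAtop : ν A ≠ ∞ := measure_ne_top ν A
  have hνA0 : ν A ≠ 0 := fun h => by simp [h] at hcon
  have httop : t ≠ ∞ := (lt_of_le_of_lt htle (measure_lt_top ν A)).ne
  set ε : ℝ≥0∞ := ν A - t with hε
  have hε0 : ε ≠ 0 := (tsub_pos_of_lt hcon).ne'
  have hεtop : ε ≠ ∞ := (lt_of_le_of_lt tsub_le_self (measure_lt_top ν A)).ne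
  set δ : ℝ≥0∞ := ε / 2 / 2 with hδ
  have hδ0 : δ ≠ 0 := by
    simp [hδ, ENNReal.div_eq_zero_iff, hε0]
  have hδtop : δ ≠ ∞ := by
    simp only [hδ, ne_eq]
    exact (ENNReal.div_lt_top (ENNReal.div_lt_top hεtop (by norm_num)).ne (by norm_num)).ne
  set T : ℝ≥0∞ := t + ε / 2 with hT
  have hTtop : T ≠ ∞ := by
    simp only [hT, ne_eq, ENNReal.add_eq_top, httop, false_or]
    exact (ENNReal.div_lt_top hεtop (by norm_num)).ne
  have hδT : t + δ < T := by
    rw [hT, hδ]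
    exact ENNReal.add_lt_add_left httop
      (ENNReal.half_lt_self (by simp [hε0]) (ENNReal.div_lt_top hεtop (by norm_num)).ne)
  -- restricted measure
  set ν' : Measure X := ν.restrict A with hν'
  have hν'univ : ν' Set.univ = ν A := by rw [hν', Measure.restrict_apply_univ]
  -- choice of s₀
  set s₀ : ℝ≥0 := (δ / ν A).toNNReal with hs₀
  have hs₀coe : (s₀ : ℝ≥0∞) = δ / ν A := by
    rw [hs₀]
    exact ENNReal.coe_toNNReal (by
      exact (ENNReal.div_lt_top hδtop hνA0).ne)
  have hs₀0 : (s₀ : ℝ≥0∞) ≠ 0 := by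
    rw [hs₀coe]
    simp [ENNReal.div_eq_zero_iff, hδ0, hνAtop]
  have hs₀c : (s₀ : ℝ≥0∞) * ν A ≤ δ := by
    rw [hs₀coe, ENNReal.div_mul_cancel hνA0 hνAtop]
  -- choice of n
  obtain ⟨n, hn⟩ := ENNReal.exists_nat_gt
    (show T / (δ * s₀) ≠ ∞ from
      (ENNReal.div_lt_top hTtop (by
        simp [mul_eq_zero, hδ0, hs₀0])).ne)
  have hn0 : (n : ℝ≥0∞) ≠ 0 := by
    rintro h
    rw [h] at hn
    exact (not_lt_of_ge zero_le) hn
  have hn1 : 1 ≤ n := by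
    by_contra h
    push_neg at h
    interval_cases n
    · simp at hn0
  have hnT : T < (n : ℝ≥0∞) * (δ * s₀) := by
    rwa [ENNReal.div_lt_iff (Or.inl (by simp [mul_eq_zero, hδ0, hs₀0]))
      (Or.inl (by
        exact ENNReal.mul_ne_top hδtop ENNReal.coe_ne_top))] at hn
  -- key step: per κ in K, a continuous pair approximating the Hahn minorant
  have key : ∀ κ : FiniteMeasure X, κ ∈ K → ∃ f f' : C(X, ℝ≥0),
      (∀ x, f x + f' x = 1) ∧
      ∫⁻ x, (f' x : ℝ≥0∞) ∂ν' + (n : ℝ≥0∞) * ∫⁻ x, (f x : ℝ≥0∞) ∂(κ : Measure X) ≤ t + δ := by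
    intro κ hκ
    set μ₂ : Measure X := (n : ℝ≥0∞) • (κ : Measure X) with hμ₂
    haveI : IsFiniteMeasure μ₂ := by
      constructor
      rw [hμ₂, Measure.smul_apply, smul_eq_mul]
      exact ENNReal.mul_lt_top (ENNReal.natCast_lt_top n) (measure_lt_top _ _)
    obtain ⟨m, f, f', hmν', hmμ₂, hff', hint⟩ := aux_hahn ν' μ₂ hδ0
    haveI : IsFiniteMeasure m :=
      ⟨lt_of_le_of_lt (Measure.le_iff'.1 hmν' Set.univ) (measure_lt_top ν' _)⟩
    haveI hτfin : IsFiniteMeasure ((n : ℝ≥0∞)⁻¹ • m) := by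
      constructor
      rw [Measure.smul_apply, smul_eq_mul]
      exact ENNReal.mul_lt_top (ENNReal.inv_lt_top.2 (pos_iff_ne_zero.2 hn0))
        (measure_lt_top m _)
    set τ : FiniteMeasure X := ⟨(n : ℝ≥0∞)⁻¹ • m, hτfin⟩ with hτ
    have hτcoe : (τ : Measure X) = (n : ℝ≥0∞)⁻¹ • m := rfl
    have hτleκ : (τ : Measure X) ≤ (κ : Measure X) := by
      rw [Measure.le_iff']
      intro s
      rw [hτcoe, Measure.smul_apply, smul_eq_mul]
      have h1 : m s ≤ (n : ℝ≥0∞) * (κ : Measure X) s := by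
        have := Measure.le_iff'.1 hmμ₂ s
        rwa [hμ₂, Measure.smul_apply, smul_eq_mul] at this
      calc (n : ℝ≥0∞)⁻¹ * m s ≤ (n : ℝ≥0∞)⁻¹ * ((n : ℝ≥0∞) * (κ : Measure X) s) := by gcongr
        _ = (κ : Measure X) s := by
          rw [← mul_assoc, ENNReal.inv_mul_cancel hn0 (ENNReal.natCast_ne_top n), one_mul]
    have hmν : m ≤ ν := hmν'.trans Measure.restrict_le_self
    have hmeq : m = (n : ℝ≥0∞) • (τ : Measure X) := by
      rw [hτcoe, smul_smul, ENNReal.mul_inv_cancel hn0 (ENNReal.natCast_ne_top n), one_smul]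
    have hmA : m A ≤ t := by
      rw [ht]
      exact le_iSup₂ (f := fun (m : Measure X)
        (_ : (∃ n : ℕ, 1 ≤ n ∧ ∃ κ ∈ K, m = (n : ℝ≥0∞) • (κ : Measure X)) ∧ m ≤ ν) => m A)
        m ⟨⟨n, hn1, τ, hdown κ hκ τ hτleκ, hmeq⟩, hmν⟩
    have hmAc : m Aᶜ = 0 := by
      have h2 := Measure.le_iff'.1 hmν' Aᶜ
      have h3 : ν' Aᶜ = 0 := by
        rw [hν', Measure.restrict_apply hA.compl, Set.compl_inter_self, measure_empty]
      exact le_antisymm (h3 ▸ h2) zero_le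
    have hmuniv : m Set.univ ≤ t := by
      rw [← measure_add_measure_compl hA, hmAc, add_zero]
      exact hmA
    refine ⟨f, f', hff', ?_⟩
    have : ∫⁻ x, (f x : ℝ≥0∞) ∂μ₂ = (n : ℝ≥0∞) * ∫⁻ x, (f x : ℝ≥0∞) ∂(κ : Measure X) := by
      rw [hμ₂, lintegral_smul_measure, smul_eq_mul]
    rw [← this]
    exact hint.trans (add_le_add_left hmuniv δ)
  -- choose pairs per κ
  have key' : ∀ i : K, ∃ ff : C(X, ℝ≥0) × C(X, ℝ≥0),
      (∀ x, ff.1 x + ff.2 x = 1) ∧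
      ∫⁻ x, (ff.2 x : ℝ≥0∞) ∂ν' +
        (n : ℝ≥0∞) * ∫⁻ x, (ff.1 x : ℝ≥0∞) ∂((i : FiniteMeasure X) : Measure X) ≤ t + δ := by
    intro i
    obtain ⟨f, f', h1, h2⟩ := key i i.2
    exact ⟨⟨f, f'⟩, h1, h2⟩
  choose ff hff' hbound using key'
  set f : K → C(X, ℝ≥0) := fun i => (ff i).1 with hfdef
  set f' : K → C(X, ℝ≥0) := fun i => (ff i).2 with hf'def
  have hf1 : ∀ (i : K) (x : X), (f i) x ≤ 1 := fun i x => le_of_le_of_eq le_self_add (hff' i x)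
  have hf'1 : ∀ (i : K) (x : X), (f' i) x ≤ 1 := fun i x => le_of_le_of_eq le_add_self (hff' i x)
  -- the open cover
  set V : K → Set (FiniteMeasure X) := fun i =>
    {μ' : FiniteMeasure X |
      ∫⁻ x, ((f' i) x : ℝ≥0∞) ∂ν' +
        (n : ℝ≥0∞) * ∫⁻ x, ((f i) x : ℝ≥0∞) ∂(μ' : Measure X) < T} with hV
  have hVopen : ∀ i : K, IsOpen (V i) := by
    intro i
    have hcont : Continuous fun μ' : FiniteMeasure X =>
        ∫⁻ x, ((f i) x : ℝ≥0∞) ∂(μ' : Measure X) := by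
      have h2 : (fun μ' : FiniteMeasure X => ∫⁻ x, ((f i) x : ℝ≥0∞) ∂(μ' : Measure X))
          = fun μ' : FiniteMeasure X =>
            ((μ'.testAgainstNN (BoundedContinuousFunction.mkOfCompact (f i)) : ℝ≥0) : ℝ≥0∞) := by
        funext μ'
        rw [FiniteMeasure.testAgainstNN_coe_eq]
        rfl
      rw [h2]
      exact ENNReal.continuous_coe.comp (FiniteMeasure.continuous_testAgainstNN_eval _)
    have hVeq : V i = (fun μ' : FiniteMeasure X =>
        ∫⁻ x, ((f' i) x : ℝ≥0∞) ∂ν' +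
          (n : ℝ≥0∞) * ∫⁻ x, ((f i) x : ℝ≥0∞) ∂(μ' : Measure X)) ⁻¹' (Set.Iio T) := rfl
    rw [hVeq]
    exact isOpen_Iio.preimage (continuous_const.add
      ((ENNReal.continuous_const_mul (ENNReal.natCast_ne_top n)).comp hcont))
  have hcover : K ⊆ ⋃ i : K, V i := by
    intro κ hκ
    exact Set.mem_iUnion.2 ⟨⟨κ, hκ⟩, lt_of_le_of_lt (hbound ⟨κ, hκ⟩) hδT⟩
  obtain ⟨J, hJ⟩ := hcomp.elim_finite_subcover V hVopen hcover
  obtain ⟨κ₀, hκ₀⟩ := hne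
  have hJne : J.Nonempty := by
    rcases Set.mem_iUnion₂.1 (hJ hκ₀) with ⟨i, hiJ, _⟩
    exact ⟨i, hiJ⟩
  haveI : Nonempty {i : K // i ∈ J} := ⟨⟨hJne.choose, hJne.choose_spec⟩⟩
  -- data for the separation argument
  set b : {i : K // i ∈ J} → ℝ≥0∞ := fun i => ∫⁻ x, ((f' i.1) x : ℝ≥0∞) ∂ν' with hb
  set L : {i : K // i ∈ J} → FiniteMeasure X → ℝ≥0∞ :=
    fun i μ' => ∫⁻ x, ((f i.1) x : ℝ≥0∞) ∂(μ' : Measure X) with hL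
  have hbfin : ∀ i, b i ≠ ∞ := by
    intro i
    have hle : b i ≤ ν' Set.univ :=
      lintegral_le_meas (fun a => by exact_mod_cast hf'1 i.1 a) (by simp)
    exact (lt_of_le_of_lt hle (measure_lt_top _ _)).ne
  have hLfin : ∀ i μ', L i μ' ≠ ∞ := by
    intro i μ'
    have hle : L i μ' ≤ (μ' : Measure X) Set.univ :=
      lintegral_le_meas (fun a => by exact_mod_cast hf1 i.1 a) (by simp)
    exact (lt_of_le_of_lt hle (measure_lt_top _ _)).ne
  set g : {i : K // i ∈ J} → FiniteMeasure X → ℝ :=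
    fun i μ' => (b i).toReal + (n : ℝ) * (L i μ').toReal with hg
  set C : Set ({i : K // i ∈ J} → ℝ) := (fun μ' => fun i => g i μ') '' K with hCdef
  have hsmul : ∀ (a : ℝ≥0) (μ' : Measure X), a • μ' = (a : ℝ≥0∞) • μ' := by
    intro a μ'
    rfl
  have hgaff : ∀ (a₁ a₂ : ℝ≥0) (κ₁ κ₂ : FiniteMeasure X), ((a₁ : ℝ) + a₂ = 1) →
      ∀ i, g i (a₁ • κ₁ + a₂ • κ₂) = a₁ * g i κ₁ + a₂ * g i κ₂ := by
    intro a₁ a₂ κ₁ κ₂ hab i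
    have hLeq : L i (a₁ • κ₁ + a₂ • κ₂) = (a₁ : ℝ≥0∞) * L i κ₁ + (a₂ : ℝ≥0∞) * L i κ₂ := by
      rw [hL]
      simp only
      rw [FiniteMeasure.toMeasure_add, FiniteMeasure.toMeasure_smul, FiniteMeasure.toMeasure_smul,
        hsmul a₁, hsmul a₂, lintegral_add_measure, lintegral_smul_measure, lintegral_smul_measure,
        smul_eq_mul, smul_eq_mul]
    have hfin1 : (a₁ : ℝ≥0∞) * L i κ₁ ≠ ∞ := ENNReal.mul_ne_top ENNReal.coe_ne_top (hLfin i κ₁)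
    have hfin2 : (a₂ : ℝ≥0∞) * L i κ₂ ≠ ∞ := ENNReal.mul_ne_top ENNReal.coe_ne_top (hLfin i κ₂)
    rw [hg]
    simp only
    rw [hLeq, ENNReal.toReal_add hfin1 hfin2, ENNReal.toReal_mul, ENNReal.toReal_mul,
      ENNReal.coe_toReal, ENNReal.coe_toReal]
    have hab2 : (a₂ : ℝ) = 1 - a₁ := by linarith
    rw [hab2]
    ring
  have hCconv : Convex ℝ C := by
    rintro y₁ ⟨κ₁, hκ₁, rfl⟩ y₂ ⟨κ₂, hκ₂, rfl⟩ p q hp hq hpq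
    have hab : (↑(p.toNNReal) : ℝ) + ↑(q.toNNReal) = 1 := by
      rw [Real.coe_toNNReal p hp, Real.coe_toNNReal q hq]
      exact hpq
    have habnn : p.toNNReal + q.toNNReal = 1 := by
      have : ((p.toNNReal + q.toNNReal : ℝ≥0) : ℝ) = ((1 : ℝ≥0) : ℝ) := by
        push_cast
        exact hab
      exact_mod_cast this
    refine ⟨p.toNNReal • κ₁ + q.toNNReal • κ₂,
      hconv hκ₁ hκ₂ zero_le zero_le habnn, ?_⟩
    funext i
    simp only [Pi.add_apply, Pi.smul_apply, smul_eq_mul]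
    rw [hgaff p.toNNReal q.toNNReal κ₁ κ₂ hab i,
      Real.coe_toNNReal p hp, Real.coe_toNNReal q hq]
  have hCne : C.Nonempty := ⟨_, ⟨κ₀, hκ₀, rfl⟩⟩
  have hCcond : ∀ y ∈ C, ∃ i, y i ≤ T.toReal := by
    rintro y ⟨κ', hκ', rfl⟩
    rcases Set.mem_iUnion₂.1 (hJ hκ') with ⟨i, hiJ, hiV⟩
    refine ⟨⟨i, hiJ⟩, ?_⟩
    have hlt : ∫⁻ x, ((f' i) x : ℝ≥0∞) ∂ν' +
        (n : ℝ≥0∞) * ∫⁻ x, ((f i) x : ℝ≥0∞) ∂((κ' : FiniteMeasure X) : Measure X) < T := hiV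
    have htr := ENNReal.toReal_mono hTtop hlt.le
    rw [ENNReal.toReal_add (hbfin ⟨i, hiJ⟩)
      (ENNReal.mul_ne_top (ENNReal.natCast_ne_top n) (hLfin ⟨i, hiJ⟩ κ')),
      ENNReal.toReal_mul, ENNReal.toReal_natCast] at htr
    exact htr
  obtain ⟨lam, hlam0, hlam1, hlamle⟩ := aux_sep hCconv hCne hCcond
  -- form the convex combination
  set lam' : {i : K // i ∈ J} → ℝ≥0 := fun i => (lam i).toNNReal with hlam'
  have hlam'coe : ∀ i, ((lam' i : ℝ≥0) : ℝ) = lam i := fun i => Real.coe_toNNReal _ (hlam0 i)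
  have hlam'sum : ∑ i, lam' i = 1 := by
    have hco : ((∑ i, lam' i : ℝ≥0) : ℝ) = ((1 : ℝ≥0) : ℝ) := by
      push_cast
      rw [Finset.sum_congr rfl fun i _ => hlam'coe i]
      simpa using hlam1
    exact_mod_cast hco
  set F : X → ℝ≥0 := fun x => ∑ i, lam' i * (f i.1) x with hF
  set F' : X → ℝ≥0 := fun x => ∑ i, lam' i * (f' i.1) x with hF'
  have hFcont : Continuous F :=
    continuous_finset_sum _ fun i _ => continuous_const.mul (map_continuous (f i.1))
  have hF'cont : Continuous F' :=
    continuous_finset_sum _ fun i _ => continuous_const.mul (map_continuous (f' i.1))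
  have hFmeas : Measurable fun x => (F x : ℝ≥0∞) := hFcont.measurable.coe_nnreal_ennreal
  have hF'meas : Measurable fun x => (F' x : ℝ≥0∞) := hF'cont.measurable.coe_nnreal_ennreal
  have hFF'1 : ∀ x, F x + F' x = 1 := by
    intro x
    rw [hF, hF']
    simp only
    rw [← Finset.sum_add_distrib]
    rw [Finset.sum_congr rfl (fun i _ => by rw [← mul_add, hff' i.1 x, mul_one])]
    exact hlam'sum
  have hFle1 : ∀ x, F x ≤ 1 := fun x => le_of_le_of_eq le_self_add (hFF'1 x)
  have hlinint : ∀ (h : {i : K // i ∈ J} → C(X, ℝ≥0)) (μ' : Measure X),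
      ∫⁻ x, ((∑ i, lam' i * (h i) x : ℝ≥0) : ℝ≥0∞) ∂μ' =
        ∑ i, (lam' i : ℝ≥0∞) * ∫⁻ x, ((h i) x : ℝ≥0∞) ∂μ' := by
    intro h μ'
    have hcast : ∀ x, ((∑ i, lam' i * (h i) x : ℝ≥0) : ℝ≥0∞) =
        ∑ i, (lam' i : ℝ≥0∞) * ((h i) x : ℝ≥0∞) := by
      intro x
      push_cast
      rfl
    rw [lintegral_congr hcast, lintegral_finset_sum _ (fun i _ =>
      ((map_continuous (h i)).measurable.coe_nnreal_ennreal).const_mul _)]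
    exact Finset.sum_congr rfl fun i _ =>
      lintegral_const_mul _ (map_continuous (h i)).measurable.coe_nnreal_ennreal
  have hfinal : ∀ κ' : FiniteMeasure X, κ' ∈ K →
      ∫⁻ x, (F' x : ℝ≥0∞) ∂ν' +
        (n : ℝ≥0∞) * ∫⁻ x, (F x : ℝ≥0∞) ∂(κ' : Measure X) ≤ T := by
    intro κ' hκ'
    have hy := hlamle _ ⟨κ', hκ', rfl⟩
    have hLHS : ∫⁻ x, (F' x : ℝ≥0∞) ∂ν' +
        (n : ℝ≥0∞) * ∫⁻ x, (F x : ℝ≥0∞) ∂(κ' : Measure X)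
        = ∑ i, (lam' i : ℝ≥0∞) * (b i + (n : ℝ≥0∞) * L i κ') := by
      rw [hF, hF']
      simp only
      rw [hlinint (fun i => f' i.1) ν', hlinint (fun i => f i.1) (κ' : Measure X), Finset.mul_sum, ← Finset.sum_add_distrib]
      refine Finset.sum_congr rfl fun i _ => ?_
      rw [hb, hL]
      simp only
      ring
    rw [hLHS]
    have hterm_ne : ∀ i ∈ Finset.univ, (lam' i : ℝ≥0∞) * (b i + (n : ℝ≥0∞) * L i κ') ≠ ∞ :=
      fun i _ => ENNReal.mul_ne_top ENNReal.coe_ne_top (ENNReal.add_ne_top.2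
        ⟨hbfin i, ENNReal.mul_ne_top (ENNReal.natCast_ne_top n) (hLfin i κ')⟩)
    have hsum_ne : (∑ i, (lam' i : ℝ≥0∞) * (b i + (n : ℝ≥0∞) * L i κ')) ≠ ∞ :=
      (ENNReal.sum_lt_top.2 fun i hi => lt_top_iff_ne_top.2 (hterm_ne i hi)).ne
    rw [← ENNReal.toReal_le_toReal hsum_ne hTtop, ENNReal.toReal_sum hterm_ne]
    have hterms : ∀ i ∈ Finset.univ,
        ((lam' i : ℝ≥0∞) * (b i + (n : ℝ≥0∞) * L i κ')).toReal = lam i * g i κ' := by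
      intro i _
      rw [ENNReal.toReal_mul, ENNReal.coe_toReal,
        ENNReal.toReal_add (hbfin i) (ENNReal.mul_ne_top (ENNReal.natCast_ne_top n) (hLfin i κ')),
        ENNReal.toReal_mul, ENNReal.toReal_natCast, hlam'coe i, hg]
    rw [Finset.sum_congr rfl hterms]
    exact hy
  -- the level set
  set B : Set X := {x | (s₀ : ℝ≥0) < F x} with hBdef
  have hBopen : IsOpen B := isOpen_lt continuous_const hFcont
  have hBmeas : MeasurableSet B := hBopen.measurableSet
  have hκB : ∀ κ' : FiniteMeasure X, κ' ∈ K → (κ' : Measure X) (A ∩ B) ≤ T / n / s₀ := by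
    intro κ' hκ'
    have h1 : (κ' : Measure X) (A ∩ B) ≤
        (κ' : Measure X) {x | (s₀ : ℝ≥0∞) ≤ (F x : ℝ≥0∞)} := by
      apply measure_mono
      intro x hx
      have hxB : (s₀ : ℝ≥0) < F x := hx.2
      exact_mod_cast le_of_lt hxB
    have h2 := mul_meas_ge_le_lintegral₀ (μ := (κ' : Measure X)) hFmeas.aemeasurable (s₀ : ℝ≥0∞)
    have h3 : ∫⁻ x, (F x : ℝ≥0∞) ∂(κ' : Measure X) ≤ T / n := by
      have h4 : (n : ℝ≥0∞) * ∫⁻ x, (F x : ℝ≥0∞) ∂(κ' : Measure X) ≤ T :=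
        le_trans le_add_self (hfinal κ' hκ')
      rw [ENNReal.le_div_iff_mul_le (Or.inl hn0) (Or.inl (ENNReal.natCast_ne_top n))]
      rwa [mul_comm]
    calc (κ' : Measure X) (A ∩ B)
        ≤ (κ' : Measure X) {x | (s₀ : ℝ≥0∞) ≤ (F x : ℝ≥0∞)} := h1
      _ ≤ (∫⁻ x, (F x : ℝ≥0∞) ∂(κ' : Measure X)) / s₀ := by
          rw [ENNReal.le_div_iff_mul_le (Or.inl hs₀0) (Or.inl ENNReal.coe_ne_top), mul_comm]
          exact h2
      _ ≤ T / n / s₀ := by gcongr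
  have hcap : ν (A ∩ B) ≤ T / n / s₀ :=
    (hmaj (A ∩ B) (hA.inter hBmeas)).trans (iSup₂_le hκB)
  have hq : T / n / s₀ < δ := by
    rw [ENNReal.div_lt_iff (Or.inl hs₀0) (Or.inl ENNReal.coe_ne_top),
      ENNReal.div_lt_iff (Or.inl hn0) (Or.inl (ENNReal.natCast_ne_top n))]
    calc T < (n : ℝ≥0∞) * (δ * s₀) := hnT
      _ = δ * (s₀ : ℝ≥0∞) * n := by ring
  have hints : ∫⁻ x, (F' x : ℝ≥0∞) ∂ν' + ∫⁻ x, (F x : ℝ≥0∞) ∂ν' = ν A := by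
    rw [← lintegral_add_left hF'meas]
    have hone : ∀ x, ((F' x : ℝ≥0∞) + (F x : ℝ≥0∞)) = 1 := by
      intro x
      rw [← ENNReal.coe_add]
      norm_cast
      rw [add_comm]
      exact hFF'1 x
    rw [lintegral_congr hone, lintegral_one, hν'univ]
  have hbound0 : ∫⁻ x, (F' x : ℝ≥0∞) ∂ν' ≤ T := le_self_add.trans (hfinal κ₀ hκ₀)
  have hνpartB : ∫⁻ x, (F x : ℝ≥0∞) ∂ν' ≤ ν' B + (s₀ : ℝ≥0∞) * ν A := by
    have hpoint : ∀ x, (F x : ℝ≥0∞) ≤ B.indicator (1 : X → ℝ≥0∞) x + (s₀ : ℝ≥0∞) := by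
      intro x
      by_cases hx : x ∈ B
      · rw [Set.indicator_of_mem hx]
        simp only [Pi.one_apply]
        exact le_add_right (by exact_mod_cast hFle1 x)
      · rw [Set.indicator_of_notMem hx, zero_add]
        have hxB : F x ≤ s₀ := not_lt.1 hx
        exact_mod_cast hxB
    calc ∫⁻ x, (F x : ℝ≥0∞) ∂ν'
        ≤ ∫⁻ x, (B.indicator (1 : X → ℝ≥0∞) x + (s₀ : ℝ≥0∞)) ∂ν' := lintegral_mono hpoint
      _ = ν' B + (s₀ : ℝ≥0∞) * ν A := by
          have hmeasind : Measurable (B.indicator (1 : X → ℝ≥0∞)) :=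
            measurable_one.indicator hBmeas
          rw [lintegral_add_left hmeasind, lintegral_indicator_one hBmeas,
            lintegral_const, hν'univ]
  have hν'B : ν' B = ν (A ∩ B) := by
    rw [hν', Measure.restrict_apply hBmeas, Set.inter_comm]
  have hchain : ν A < ν A := by
    calc ν A = ∫⁻ x, (F' x : ℝ≥0∞) ∂ν' + ∫⁻ x, (F x : ℝ≥0∞) ∂ν' := hints.symm
      _ ≤ T + (ν' B + (s₀ : ℝ≥0∞) * ν A) := add_le_add hbound0 hνpartB
      _ ≤ T + (ν (A ∩ B) + δ) := by
          rw [hν'B]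
          gcongr
      _ < T + (δ + δ) := by
          refine ENNReal.add_lt_add_left hTtop ?_
          exact ENNReal.add_lt_add_right hδtop (lt_of_le_of_lt hcap hq)
      _ = t + ε := by
          rw [hT, hδ, ENNReal.add_halves, add_assoc, ENNReal.add_halves]
      _ = ν A := by
          rw [hε]
          exact add_tsub_cancel_of_le htle
  exact absurd hchain (lt_irrefl _)
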